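/- The function δ(ε) = Φ(−ε/μ + μ/2) − e^ε·Φ(−ε/μ − μ/2) is nonincreasing in ε on [0, ∞) for every fixed μ > 0, and satisfies 0 ≤ δ(ε) ≤ 1. -/

import Mathlib

open MeasureTheory ProbabilityTheory

/-- The standard normal CDF `Φ`. -/
noncomputable def stdNormalCDF (x : ℝ) : ℝ := cdf (gaussianReal 0 1) x

open Set

lemma continuous_gpdf (m : ℝ) (v : NNReal) : Continuous (gaussianPDFReal m v) := by
  unfold gaussianPDFReal
  fun_prop

lemma cdf_gaussian_eq_integral (m x : ℝ) :
    cdf (gaussianReal m 1) x = ∫ t in Iic x, gaussianPDFReal m 1 t := by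
  rw [cdf_eq_real, measureReal_def, gaussianReal_apply_eq_integral m one_ne_zero,
    ENNReal.toReal_ofReal
      (setIntegral_nonneg measurableSet_Iic fun t _ => gaussianPDFReal_nonneg _ _ _)]

lemma stdNormalCDF_eq_integral (x : ℝ) :
    stdNormalCDF x = ∫ t in Iic x, gaussianPDFReal 0 1 t :=
  cdf_gaussian_eq_integral 0 x

lemma stdNormalCDF_shift (m x : ℝ) :
    stdNormalCDF (x + m) = ∫ t in Iic x, gaussianPDFReal (-m) 1 t := by
  have hmap : (gaussianReal (-m) 1).map (· + m) = gaussianReal 0 1 := by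
    rw [gaussianReal_map_add_const]
    norm_num
  rw [stdNormalCDF, cdf_eq_real, measureReal_def, ← hmap,
    Measure.map_apply (measurable_add_const m) measurableSet_Iic,
    show (· + m) ⁻¹' Iic (x + m) = Iic x by ext y; simp,
    gaussianReal_apply_eq_integral _ one_ne_zero,
    ENNReal.toReal_ofReal
      (setIntegral_nonneg measurableSet_Iic fun t _ => gaussianPDFReal_nonneg _ _ _)]

lemma key_nonneg (μ : ℝ) (hμ : 0 < μ) (ε : ℝ) :
    Real.exp ε * stdNormalCDF (-ε / μ - μ / 2) ≤ stdNormalCDF (-ε / μ + μ / 2) := by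
  obtain ⟨b, hb⟩ : ∃ b : ℝ, b = -ε / μ - μ / 2 := ⟨_, rfl⟩
  rw [show -ε / μ - μ / 2 = b from hb.symm,
    show -ε / μ + μ / 2 = b + μ from by rw [hb]; ring, stdNormalCDF_shift, stdNormalCDF_eq_integral, ← integral_const_mul]
  refine setIntegral_mono_on
    (((integrable_gaussianPDFReal 0 1).const_mul _).integrableOn)
    ((integrable_gaussianPDFReal (-μ) 1).integrableOn)
    measurableSet_Iic (fun x hx => ?_)
  simp only [mem_Iic] at hx
  have hxb : μ * x ≤ μ * b := mul_le_mul_of_nonneg_left hx hμ.le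
  have hbb : μ * b = -ε - μ ^ 2 / 2 := by rw [hb]; field_simp
  simp only [gaussianPDFReal, NNReal.coe_one, mul_one, sub_zero, sub_neg_eq_add]
  rw [mul_comm (Real.exp ε), mul_assoc, ← Real.exp_add]
  have hc : (0:ℝ) ≤ (Real.sqrt (2 * Real.pi))⁻¹ := by positivity
  refine mul_le_mul_of_nonneg_left (Real.exp_le_exp.mpr ?_) hc
  have hsq : (x + μ) ^ 2 = x ^ 2 + 2 * (μ * x) + μ ^ 2 := by ring
  linarith

lemma hasDerivAt_stdNormalCDF (x : ℝ) :
    HasDerivAt stdNormalCDF (gaussianPDFReal 0 1 x) x := by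
  have hcont : Continuous (gaussianPDFReal 0 1) := continuous_gpdf 0 1
  have hint : Integrable (gaussianPDFReal 0 1) := integrable_gaussianPDFReal 0 1
  have key : ∀ u : ℝ,
      stdNormalCDF u = stdNormalCDF 0 + ∫ t in (0:ℝ)..u, gaussianPDFReal 0 1 t := by
    intro u
    have h := intervalIntegral.integral_Iic_sub_Iic (μ := volume) (a := (0:ℝ)) (b := u)
      hint.integrableOn hint.integrableOn
    rw [stdNormalCDF_eq_integral, stdNormalCDF_eq_integral]
    linarith
  have hd : HasDerivAt (fun u => stdNormalCDF 0 + ∫ t in (0:ℝ)..u, gaussianPDFReal 0 1 t)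
      (gaussianPDFReal 0 1 x) x :=
    (intervalIntegral.integral_hasDerivAt_right (hint.intervalIntegrable)
      (hcont.stronglyMeasurable.stronglyMeasurableAtFilter)
      hcont.continuousAt).const_add _
  rwa [show (fun u => stdNormalCDF 0 + ∫ t in (0:ℝ)..u, gaussianPDFReal 0 1 t) = stdNormalCDF
    from funext fun u => (key u).symm] at hd

lemma exp_mul_pdf (μ : ℝ) (hμ : 0 < μ) (ε : ℝ) :
    Real.exp ε * gaussianPDFReal 0 1 (-ε / μ - μ / 2) = gaussianPDFReal 0 1 (-ε / μ + μ / 2) := by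
  simp only [gaussianPDFReal, NNReal.coe_one, mul_one, sub_zero]
  rw [mul_comm (Real.exp ε), mul_assoc, ← Real.exp_add]
  congr 1
  field_simp
  ring

lemma hasDerivAt_delta (μ : ℝ) (hμ : 0 < μ) (ε : ℝ) :
    HasDerivAt (fun e => stdNormalCDF (-e / μ + μ / 2) - Real.exp e * stdNormalCDF (-e / μ - μ / 2))
      (-(Real.exp ε * stdNormalCDF (-ε / μ - μ / 2))) ε := by
  have h1 : HasDerivAt (fun e : ℝ => -e / μ + μ / 2) (-1 / μ) ε :=
    (((hasDerivAt_id ε).neg).div_const μ).add_const _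
  have h1' : HasDerivAt (fun e : ℝ => -e / μ - μ / 2) (-1 / μ) ε :=
    (((hasDerivAt_id ε).neg).div_const μ).sub_const _
  have h2 : HasDerivAt (fun e => stdNormalCDF (-e / μ + μ / 2))
      (gaussianPDFReal 0 1 (-ε / μ + μ / 2) * (-1 / μ)) ε :=
    (hasDerivAt_stdNormalCDF _).comp ε h1
  have h3 : HasDerivAt (fun e => stdNormalCDF (-e / μ - μ / 2))
      (gaussianPDFReal 0 1 (-ε / μ - μ / 2) * (-1 / μ)) ε :=
    (hasDerivAt_stdNormalCDF _).comp ε h1'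
  have h4 : HasDerivAt (fun e => Real.exp e * stdNormalCDF (-e / μ - μ / 2))
      (Real.exp ε * stdNormalCDF (-ε / μ - μ / 2) +
        Real.exp ε * (gaussianPDFReal 0 1 (-ε / μ - μ / 2) * (-1 / μ))) ε :=
    (Real.hasDerivAt_exp ε).mul h3
  have h5 := h2.sub h4
  refine h5.congr_deriv ?_
  linear_combination (1 / μ) * exp_mul_pdf μ hμ ε

/-- For every fixed `μ > 0`, the privacy profile
`δ(ε) = Φ(−ε/μ + μ/2) − e^ε Φ(−ε/μ − μ/2)` is nonincreasing in `ε` on `[0, ∞)` and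
satisfies `0 ≤ δ(ε) ≤ 1` there. -/
theorem stmt12 (μ : ℝ) (hμ : 0 < μ) :
    (∀ ε₁ ε₂ : ℝ, 0 ≤ ε₁ → ε₁ ≤ ε₂ →
      stdNormalCDF (-ε₂ / μ + μ / 2) - Real.exp ε₂ * stdNormalCDF (-ε₂ / μ - μ / 2) ≤
        stdNormalCDF (-ε₁ / μ + μ / 2) - Real.exp ε₁ * stdNormalCDF (-ε₁ / μ - μ / 2)) ∧
    (∀ ε : ℝ, 0 ≤ ε →
      0 ≤ stdNormalCDF (-ε / μ + μ / 2) - Real.exp ε * stdNormalCDF (-ε / μ - μ / 2) ∧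
      stdNormalCDF (-ε / μ + μ / 2) - Real.exp ε * stdNormalCDF (-ε / μ - μ / 2) ≤ 1) := by
  set f : ℝ → ℝ :=
    fun e => stdNormalCDF (-e / μ + μ / 2) - Real.exp e * stdNormalCDF (-e / μ - μ / 2) with hf
  have hder : ∀ e : ℝ, HasDerivAt f (-(Real.exp e * stdNormalCDF (-e / μ - μ / 2))) e :=
    fun e => hasDerivAt_delta μ hμ e
  have hanti : AntitoneOn f (Ici 0) := by
    refine antitoneOn_of_deriv_nonpos (convex_Ici 0)
      (fun x _ => (hder x).continuousAt.continuousWithinAt)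
      (fun x _ => ((hder x).differentiableAt).differentiableWithinAt) (fun x _ => ?_)
    rw [(hder x).deriv]
    have : 0 ≤ Real.exp x * stdNormalCDF (-x / μ - μ / 2) :=
      mul_nonneg (Real.exp_pos x).le (cdf_nonneg _ _)
    linarith
  refine ⟨fun ε₁ ε₂ h1 h12 => hanti h1 (h1.trans h12) h12, fun ε hε => ?_⟩
  constructor
  · have := key_nonneg μ hμ ε
    linarith
  · have h1 : stdNormalCDF (-ε / μ + μ / 2) ≤ 1 := cdf_le_one _ _
    have h2 : 0 ≤ Real.exp ε * stdNormalCDF (-ε / μ - μ / 2) :=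
      mul_nonneg (Real.exp_pos ε).le (cdf_nonneg _ _)
    linarith
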